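/- Let C be a first-order clause (without equality) blocked by a literal L in a formula F, i.e., every L-resolvent of C with clauses of F \ {C} is valid. Let α be a propositional assignment on ground atoms falsifying a ground instance Cλ of C. Then the assignment α' obtained from α by flipping the truth value of the ground atom of Lλ satisfies every ground instance of every clause of F \ {C} that α satisfies. -/

import Mathlib

/-- First-order terms over variables `V` and function symbols `Fn`. -/
inductive Term (V Fn : Type) : Type
  | var : V → Term V Fn
  | app : Fn → List (Term V Fn) → Term V Fn

/-- A substitution maps variables to terms. -/
abbrev Subst (V Fn : Type) := V → Term V Fn

/-- Applying a substitution to a term. -/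
def Term.subst {V Fn : Type} (σ : Subst V Fn) : Term V Fn → Term V Fn
  | .var v => σ v
  | .app f ts => .app f (ts.attach.map (fun t => Term.subst σ t.1))
  decreasing_by have := List.sizeOf_lt_of_mem t.2; simp at *; omega

/-- The set of variables occurring in a term. -/
def Term.vars {V Fn : Type} : Term V Fn → Set V
  | .var v => {v}
  | .app _ ts => {x | ∃ t ∈ ts.attach, x ∈ Term.vars t.1}
  decreasing_by have := List.sizeOf_lt_of_mem t.2; simp at *; omega

/-- A term is ground if it contains no variables. -/
def Term.IsGround {V Fn : Type} (t : Term V Fn) : Prop := t.vars = ∅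

/-- Composition of substitutions: `σ.comp γ` is "first σ, then γ". -/
def Subst.comp {V Fn : Type} (σ γ : Subst V Fn) : Subst V Fn :=
  fun v => (σ v).subst γ

/-- An atom: a predicate symbol applied to a list of argument terms. -/
structure Atom (V Fn P : Type) where
  pred : P
  args : List (Term V Fn)

/-- A literal: an atom with a polarity (`true` = positive). -/
structure Lit (V Fn P : Type) where
  pol : Bool
  atom : Atom V Fn P

/-- The complement of a literal. -/
def Lit.compl {V Fn P : Type} (l : Lit V Fn P) : Lit V Fn P := ⟨!l.pol, l.atom⟩

def Atom.subst {V Fn P : Type} (σ : Subst V Fn) (A : Atom V Fn P) : Atom V Fn P :=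
  ⟨A.pred, A.args.map (Term.subst σ)⟩

def Lit.subst {V Fn P : Type} (σ : Subst V Fn) (l : Lit V Fn P) : Lit V Fn P :=
  ⟨l.pol, l.atom.subst σ⟩

/-- A clause is a multiset (disjunction) of literals. -/
abbrev Clause (V Fn P : Type) := Multiset (Lit V Fn P)

def Clause.subst {V Fn P : Type} (σ : Subst V Fn) (C : Clause V Fn P) : Clause V Fn P :=
  C.map (Lit.subst σ)

def Atom.vars {V Fn P : Type} (A : Atom V Fn P) : Set V := {x | ∃ t ∈ A.args, x ∈ t.vars}
def Lit.vars {V Fn P : Type} (l : Lit V Fn P) : Set V := l.atom.vars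
def Clause.vars {V Fn P : Type} (C : Clause V Fn P) : Set V := {x | ∃ l ∈ C, x ∈ l.vars}

/-- A clause is ground if it contains no variables. -/
def Clause.IsGround {V Fn P : Type} (C : Clause V Fn P) : Prop := C.vars = ∅

/-- A substitution `σ` unifies a list of literals if it maps them all to the same literal. -/
def IsUnifier {V Fn P : Type} (σ : Subst V Fn) (ls : List (Lit V Fn P)) : Prop :=
  ∀ l₁ ∈ ls, ∀ l₂ ∈ ls, l₁.subst σ = l₂.subst σ

/-- A most general unifier: every unifier factors through it. -/
def IsMGU {V Fn P : Type} (σ : Subst V Fn) (ls : List (Lit V Fn P)) : Prop :=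
  IsUnifier σ ls ∧ ∀ τ, IsUnifier τ ls → ∃ γ, σ.comp γ = τ

/-- Validity of an equality-free clause: it contains a complementary pair of literals. -/
def Clause.ValidEF {V Fn P : Type} (C : Clause V Fn P) : Prop :=
  ∃ A : Atom V Fn P, (⟨true, A⟩ : Lit V Fn P) ∈ C ∧ (⟨false, A⟩ : Lit V Fn P) ∈ C

/-- `C` (written as `L ∨ C'`) is blocked by `L` in `F`: all `L`-resolvents with clauses
of `F \ {L ∨ C'}` are valid. -/
def BlockedEF {V Fn P : Type} (L : Lit V Fn P) (C' : Clause V Fn P)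
    (F : Set (Clause V Fn P)) : Prop :=
  ∀ D ∈ F, D ≠ L ::ₘ C' → ∀ Ns Drest : Clause V Fn P, Ns + Drest = D → Ns ≠ 0 →
    ∀ σ : Subst V Fn, IsMGU σ (L :: (Ns.map Lit.compl).toList) →
      Clause.ValidEF (C'.subst σ + Drest.subst σ)

/-- A propositional assignment on (ground) atoms. -/
abbrev PAssign (V Fn P : Type) := Atom V Fn P → Bool

def litTrue {V Fn P : Type} (α : PAssign V Fn P) (l : Lit V Fn P) : Prop :=
  α l.atom = l.pol

/-- Propositional satisfaction of a (ground) clause. -/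
def satC {V Fn P : Type} (α : PAssign V Fn P) (C : Clause V Fn P) : Prop :=
  ∃ l ∈ C, litTrue α l

/-- A first-order interpretation. -/
structure Interp (Fn P : Type) : Type 1 where
  dom : Type
  nonempty : Nonempty dom
  fn : Fn → List dom → dom
  pr : P → List dom → Prop

def Term.eval {V Fn P : Type} (I : Interp Fn P) (ρ : V → I.dom) : Term V Fn → I.dom
  | .var v => ρ v
  | .app f ts => I.fn f (ts.attach.map (fun t => Term.eval I ρ t.1))
  decreasing_by have := List.sizeOf_lt_of_mem t.2; simp at *; omega

def litHolds {V Fn P : Type} (I : Interp Fn P) (ρ : V → I.dom) (l : Lit V Fn P) : Prop :=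
  l.pol = true ↔ I.pr l.atom.pred (l.atom.args.map (Term.eval I ρ))

def clauseHolds {V Fn P : Type} (I : Interp Fn P) (ρ : V → I.dom) (C : Clause V Fn P) : Prop :=
  ∃ l ∈ C, litHolds I ρ l

/-- First-order satisfiability of a CNF formula (clauses implicitly universally quantified). -/
def SatEF {V Fn P : Type} (F : Set (Clause V Fn P)) : Prop :=
  ∃ I : Interp Fn P, ∀ C ∈ F, ∀ ρ : V → I.dom, clauseHolds I ρ C


open Classical in
/-- Flip the truth value of the atom `A0`. -/
noncomputable def flipAtom {V Fn P : Type} (α : PAssign V Fn P) (A0 : Atom V Fn P) :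
    PAssign V Fn P :=
  fun A => if A = A0 then !(α A) else α A

section Infra
variable {V Fn P : Type}

theorem Term.indOn {motive : Term V Fn → Prop}
    (hv : ∀ v, motive (.var v))
    (ha : ∀ f ts, (∀ s ∈ ts, motive s) → motive (.app f ts)) :
    ∀ t, motive t
  | .var v => hv v
  | .app f ts => ha f ts (fun s hs => Term.indOn hv ha s)
  decreasing_by have := List.sizeOf_lt_of_mem hs; simp at *; omega

@[simp] theorem Term.subst_var (σ : Subst V Fn) (v : V) :
    (Term.var v).subst σ = σ v := by rw [Term.subst]

@[simp] theorem Term.subst_app (σ : Subst V Fn) (f : Fn) (ts : List (Term V Fn)) :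
    (Term.app f ts).subst σ = .app f (ts.map (Term.subst σ)) := by
  rw [Term.subst]
  congr 1
  exact List.attach_map_val

@[simp] theorem Term.mem_vars_var {x v : V} : x ∈ (Term.var v : Term V Fn).vars ↔ x = v := by
  rw [Term.vars]; rfl

@[simp] theorem Term.mem_vars_app {x : V} {f : Fn} {ts : List (Term V Fn)} :
    x ∈ (Term.app f ts).vars ↔ ∃ s ∈ ts, x ∈ s.vars := by
  rw [Term.vars]
  constructor
  · rintro ⟨⟨s, hs⟩, -, h⟩; exact ⟨s, hs, h⟩
  · rintro ⟨s, hs, h⟩; exact ⟨⟨s, hs⟩, List.mem_attach _ _, h⟩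

end Infra

section Infra2
variable {V Fn P : Type}

theorem Term.subst_congr {σ γ : Subst V Fn} {t : Term V Fn}
    (h : ∀ v ∈ t.vars, σ v = γ v) : t.subst σ = t.subst γ := by
  induction t using Term.indOn with
  | hv v => simpa using h v (by simp)
  | ha f ts ih =>
    simp only [Term.subst_app]
    congr 1
    exact List.map_congr_left fun s hs => ih s hs fun v hv =>
      h v (Term.mem_vars_app.2 ⟨s, hs, hv⟩)

theorem Term.subst_id (t : Term V Fn) : t.subst Term.var = t := by
  induction t using Term.indOn with
  | hv v => simp
  | ha f ts ih =>
    simp only [Term.subst_app]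
    congr 1
    conv_rhs => rw [← List.map_id ts]
    exact List.map_congr_left fun s hs => ih s hs

theorem Term.subst_comp (σ γ : Subst V Fn) (t : Term V Fn) :
    t.subst (σ.comp γ) = (t.subst σ).subst γ := by
  induction t using Term.indOn with
  | hv v => simp [Subst.comp]
  | ha f ts ih =>
    simp only [Term.subst_app, List.map_map]
    congr 1
    exact List.map_congr_left fun s hs => ih s hs

theorem Subst.comp_assoc (a b c : Subst V Fn) :
    Subst.comp (a.comp b) c = a.comp (b.comp c) := by
  funext v
  simp [Subst.comp, Term.subst_comp]

theorem Subst.var_comp (γ : Subst V Fn) : Subst.comp Term.var γ = γ := by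
  funext v; simp [Subst.comp]

/-- custom size -/
def Term.tsz : Term V Fn → ℕ
  | .var _ => 1
  | .app _ ts => 1 + (ts.attach.map (fun s => Term.tsz s.1)).sum
  decreasing_by have := List.sizeOf_lt_of_mem s.2; simp at *; omega

@[simp] theorem Term.tsz_var (v : V) : (Term.var v : Term V Fn).tsz = 1 := by rw [Term.tsz]

@[simp] theorem Term.tsz_app (f : Fn) (ts : List (Term V Fn)) :
    (Term.app f ts).tsz = 1 + (ts.map Term.tsz).sum := by
  rw [Term.tsz]; congr 1; exact congrArg _ (List.attach_map_val)

theorem Term.tsz_pos (t : Term V Fn) : 1 ≤ t.tsz := by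
  cases t <;> simp

/-- vars as a list -/
def Term.varsL : Term V Fn → List V
  | .var v => [v]
  | .app _ ts => ts.attach.flatMap (fun s => Term.varsL s.1)
  decreasing_by have := List.sizeOf_lt_of_mem s.2; simp at *; omega

theorem Term.mem_varsL {x : V} {t : Term V Fn} : x ∈ t.varsL ↔ x ∈ t.vars := by
  induction t using Term.indOn with
  | hv v => rw [Term.varsL]; simp
  | ha f ts ih =>
    rw [Term.varsL]
    simp only [List.mem_flatMap, Term.mem_vars_app, List.mem_attach, true_and,
      Subtype.exists]
    constructor
    · rintro ⟨s, ⟨hs, h⟩⟩; exact ⟨s, hs, (ih s hs).1 h⟩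
    · rintro ⟨s, hs, h⟩; exact ⟨s, hs, (ih s hs).2 h⟩

end Infra2

section Infra3
variable {V Fn P : Type}

open Classical in
/-- single-point substitution -/
noncomputable def sng (x : V) (s : Term V Fn) : Subst V Fn :=
  fun v => if v = x then s else .var v

@[simp] theorem sng_same (x : V) (s : Term V Fn) : sng x s x = s := by simp [sng]

theorem sng_ne {x v : V} (s : Term V Fn) (h : v ≠ x) : sng x s v = .var v := by
  simp [sng, h]

theorem subst_sng_of_not_mem {x : V} {s t : Term V Fn} (h : x ∉ t.vars) :
    t.subst (sng x s) = t := by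
  rw [show t.subst (sng x s) = t.subst Term.var from
    Term.subst_congr fun v hv => sng_ne s (fun e => h (e ▸ hv))]
  exact Term.subst_id t

theorem sng_comp_eq_self {x : V} {t : Term V Fn} {θ : Subst V Fn}
    (h : θ x = t.subst θ) : Subst.comp (sng x t) θ = θ := by
  funext v
  by_cases hv : v = x
  · subst hv; simp [Subst.comp, h]
  · simp [Subst.comp, sng_ne _ hv]

/-- if x occurs in t, tsz (θ x) ≤ tsz (t.subst θ) -/
theorem tsz_le_of_mem_vars {x : V} {θ : Subst V Fn} :
    ∀ {t : Term V Fn}, x ∈ t.vars → (θ x).tsz ≤ (t.subst θ).tsz := by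
  intro t
  induction t using Term.indOn with
  | hv v => intro h; simp at h; subst h; simp
  | ha f ts ih =>
    intro h
    obtain ⟨s, hs, hx⟩ := Term.mem_vars_app.1 h
    have h1 := ih s hs hx
    simp only [Term.subst_app, Term.tsz_app, List.map_map, Function.comp_def]
    have : (s.subst θ).tsz ∈ ts.map fun a => (a.subst θ).tsz := by
      exact List.mem_map.2 ⟨s, hs, rfl⟩
    have h2 := List.single_le_sum (l := ts.map fun a => (a.subst θ).tsz)
      (fun n _ => Nat.zero_le n) _ this
    omega

theorem occurs_no_unif {x : V} {f : Fn} {ts : List (Term V Fn)} {θ : Subst V Fn}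
    (h : x ∈ (Term.app f ts).vars) : θ x ≠ (Term.app f ts).subst θ := by
  intro he
  obtain ⟨s, hs, hx⟩ := Term.mem_vars_app.1 h
  have h1 := tsz_le_of_mem_vars (θ := θ) hx
  have : (s.subst θ).tsz ∈ ts.map fun a => (a.subst θ).tsz :=
    List.mem_map.2 ⟨s, hs, rfl⟩
  have h2 := List.single_le_sum (l := ts.map fun a => (a.subst θ).tsz)
    (fun n _ => Nat.zero_le n) _ this
  have h3 : (θ x).tsz = ((Term.app f ts).subst θ).tsz := by rw [he]
  simp only [Term.subst_app, Term.tsz_app, List.map_map, Function.comp_def] at h3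
  omega

/-- vars of t after single substitution -/
theorem vars_subst_sng {x v : V} {s : Term V Fn} :
    ∀ {t : Term V Fn}, v ∈ (t.subst (sng x s)).vars →
      (v ∈ t.vars ∧ v ≠ x) ∨ v ∈ s.vars := by
  intro t
  induction t using Term.indOn with
  | hv w =>
    intro h
    simp only [Term.subst_var] at h
    by_cases hw : w = x
    · subst hw; simp only [sng_same] at h; exact Or.inr h
    · rw [sng_ne _ hw] at h
      simp at h
      subst h
      exact Or.inl ⟨by simp, hw⟩
  | ha f ts ih =>
    intro h
    simp only [Term.subst_app, Term.mem_vars_app, List.mem_map] at h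
    obtain ⟨u, ⟨a, ha', rfl⟩, hu⟩ := h
    rcases ih a ha' hu with ⟨h1, h2⟩ | h1
    · exact Or.inl ⟨Term.mem_vars_app.2 ⟨a, ha', h1⟩, h2⟩
    · exact Or.inr h1

end Infra3

section Unify
variable {V Fn P : Type}

/-- variable count of a unification problem -/
noncomputable def nvars (Pr : List (Term V Fn × Term V Fn)) : ℕ :=
  letI := Classical.decEq V
  ((Pr.flatMap fun p => p.1.varsL ++ p.2.varsL).toFinset).card

/-- size of a unification problem -/
def tsize (Pr : List (Term V Fn × Term V Fn)) : ℕ :=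
  (Pr.map fun p => p.1.tsz + p.2.tsz).sum

theorem lexHelp {a b c d : ℕ} (h1 : a ≤ c) (h2 : b < d) :
    Prod.Lex (· < ·) (· < ·) (a, b) (c, d) := by
  rcases lt_or_eq_of_le h1 with h | h
  · exact Prod.Lex.left _ _ h
  · subst h; exact Prod.Lex.right _ h2

theorem nvars_mono {Pr Qr : List (Term V Fn × Term V Fn)}
    (h : ∀ v, v ∈ (Qr.flatMap fun p => p.1.varsL ++ p.2.varsL) →
      v ∈ (Pr.flatMap fun p => p.1.varsL ++ p.2.varsL)) : nvars Qr ≤ nvars Pr := by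
  classical
  exact Finset.card_le_card (fun v hv => by
    simp only [List.mem_toFinset] at hv ⊢; exact h v hv)

theorem nvars_tail_le (a : Term V Fn × Term V Fn) (rest : List (Term V Fn × Term V Fn)) :
    nvars rest ≤ nvars (a :: rest) := by
  apply nvars_mono
  intro v hv
  simp only [List.flatMap_cons, List.mem_append] at hv ⊢
  exact Or.inr hv

theorem nvars_elim_lt {x : V} {t : Term V Fn} (rest : List (Term V Fn × Term V Fn))
    (hx : x ∉ t.vars) (a b : Term V Fn)
    (hxab : x ∈ a.varsL ∨ x ∈ b.varsL)
    (htab : ∀ v ∈ t.vars, v ∈ a.varsL ∨ v ∈ b.varsL) :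
    nvars (rest.map fun p => (p.1.subst (sng x t), p.2.subst (sng x t))) <
      nvars ((a, b) :: rest) := by
  classical
  apply Finset.card_lt_card
  constructor
  · intro v hv
    simp only [List.mem_toFinset, List.mem_flatMap, List.mem_map, List.flatMap_cons,
      List.mem_append, List.mem_cons] at hv ⊢
    obtain ⟨p, ⟨q, hq, rfl⟩, hp⟩ := hv
    rcases hp with hp | hp
    · rcases vars_subst_sng (Term.mem_varsL.1 hp) with ⟨h1, -⟩ | h1
      · exact Or.inr ⟨q, hq, Or.inl (Term.mem_varsL.2 h1)⟩
      · exact Or.inl (htab _ h1)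
    · rcases vars_subst_sng (Term.mem_varsL.1 hp) with ⟨h1, -⟩ | h1
      · exact Or.inr ⟨q, hq, Or.inr (Term.mem_varsL.2 h1)⟩
      · exact Or.inl (htab _ h1)
  · intro hsub
    have hxmem : x ∈ (((a, b) :: rest).flatMap fun p => p.1.varsL ++ p.2.varsL).toFinset := by
      simp only [List.mem_toFinset, List.flatMap_cons, List.mem_append]
      exact Or.inl hxab
    have hx2 := hsub hxmem
    simp only [List.mem_toFinset, List.mem_flatMap, List.mem_map] at hx2
    obtain ⟨p, ⟨q, hq, rfl⟩, hp⟩ := hx2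
    simp only [List.mem_append] at hp
    rcases hp with hp | hp <;>
      rcases vars_subst_sng (Term.mem_varsL.1 hp) with ⟨-, h2⟩ | h1 <;>
      first
        | exact h2 rfl
        | exact hx h1

theorem zip_tsz_le (ts : List (Term V Fn)) : ∀ us : List (Term V Fn),
    (((ts.zip us).map fun p => p.1.tsz + p.2.tsz).sum) ≤
      (ts.map Term.tsz).sum + (us.map Term.tsz).sum := by
  induction ts with
  | nil => intro us; simp
  | cons t ts ih =>
    intro us
    cases us with
    | nil => simp
    | cons u us =>
      simp only [List.zip_cons_cons, List.map_cons, List.sum_cons]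
      have := ih us
      omega

theorem attach_map_pair {α : Type*} (l : List (α × α)) (g : α → α) :
    (l.attach.map fun x => (g x.1.1, g x.1.2)) = l.map (fun p => (g p.1, g p.2)) :=
  List.attach_map_val (f := fun p : α × α => (g p.1, g p.2))

open Classical in
noncomputable def unify : List (Term V Fn × Term V Fn) → Option (Subst V Fn)
  | [] => some Term.var
  | (Term.var x, t) :: rest =>
    if t = Term.var x then unify rest
    else if x ∈ t.vars then none
    else (unify (rest.map fun p => (p.1.subst (sng x t), p.2.subst (sng x t)))).map
      fun σ => (sng x t).comp σ
  | (Term.app f ts, Term.var x) :: rest =>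
    if x ∈ (Term.app f ts).vars then none
    else (unify (rest.map fun p =>
        (p.1.subst (sng x (Term.app f ts)), p.2.subst (sng x (Term.app f ts))))).map
      fun σ => (sng x (Term.app f ts)).comp σ
  | (Term.app f ts, Term.app g us) :: rest =>
    if f = g ∧ ts.length = us.length then unify (ts.zip us ++ rest) else none
  termination_by Pr => (nvars Pr, tsize Pr)
  decreasing_by
  · -- delete case
    apply lexHelp (nvars_tail_le _ _)
    simp only [tsize, List.map_cons, List.sum_cons]
    have := Term.tsz_pos (Term.var x : Term V Fn)
    have := Term.tsz_pos t
    omega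
  · -- var elim (var on left)
    apply Prod.Lex.left
    rw [attach_map_pair]
    apply nvars_elim_lt rest ‹x ∉ t.vars› (Term.var x) t
    · left; rw [Term.varsL]; simp
    · intro v hv; right; exact Term.mem_varsL.2 hv
  · -- var elim (var on right)
    apply Prod.Lex.left
    rw [attach_map_pair]
    apply nvars_elim_lt rest ‹x ∉ (Term.app f ts).vars› (Term.app f ts) (Term.var x)
    · right; rw [Term.varsL]; simp
    · intro v hv; left; exact Term.mem_varsL.2 hv
  · -- decomposition
    apply lexHelp
    · apply nvars_mono
      intro v hv
      simp only [List.flatMap_append, List.flatMap_cons, List.mem_append, List.mem_flatMap] at hv ⊢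
      rcases hv with ⟨p, hp, hv⟩ | hv
      · obtain ⟨ht, hu⟩ := List.of_mem_zip (a := p.1) (b := p.2) hp
        left
        rcases hv with hv | hv
        · left
          rw [Term.mem_varsL] at hv ⊢
          exact Term.mem_vars_app.2 ⟨p.1, ht, hv⟩
        · right
          rw [Term.mem_varsL] at hv ⊢
          exact Term.mem_vars_app.2 ⟨p.2, hu, hv⟩
      · right; exact hv
    · simp only [tsize, List.map_append, List.sum_append, List.map_cons, List.sum_cons,
        Term.tsz_app]
      have := zip_tsz_le ts us
      omega

end Unify

section UnifyCorrect
variable {V Fn P : Type}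

theorem zip_of_map_eq {α β : Type*} (f : α → β) :
    ∀ (l₁ l₂ : List α), l₁.map f = l₂.map f → ∀ p ∈ l₁.zip l₂, f p.1 = f p.2 := by
  intro l₁
  induction l₁ with
  | nil => intro l₂ h p hp; simp at hp
  | cons a l₁ ih =>
    intro l₂ h p hp
    cases l₂ with
    | nil => simp at hp
    | cons b l₂ =>
      simp only [List.map_cons, List.cons.injEq] at h
      rcases List.mem_cons.1 hp with rfl | hp
      · exact h.1
      · exact ih l₂ h.2 p hp

theorem map_eq_of_zip {α β : Type*} (f : α → β) :
    ∀ (l₁ l₂ : List α), l₁.length = l₂.length →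
      (∀ p ∈ l₁.zip l₂, f p.1 = f p.2) → l₁.map f = l₂.map f := by
  intro l₁
  induction l₁ with
  | nil => intro l₂ h _; cases l₂ with
    | nil => rfl
    | cons b l₂ => simp at h
  | cons a l₁ ih =>
    intro l₂ h hp
    cases l₂ with
    | nil => simp at h
    | cons b l₂ =>
      simp only [List.map_cons]
      refine congrArg₂ _ (hp (a, b) (by simp)) (ih l₂ (by simpa using h) ?_)
      intro p hpp; exact hp p (List.mem_cons_of_mem _ hpp)

def UnifP (σ : Subst V Fn) (Pr : List (Term V Fn × Term V Fn)) : Prop :=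
  ∀ p ∈ Pr, p.1.subst σ = p.2.subst σ

theorem unify_correct : ∀ Pr : List (Term V Fn × Term V Fn),
    (∀ θ : Subst V Fn, UnifP θ Pr →
      ∃ σ, unify Pr = some σ ∧ UnifP σ Pr ∧
        ∀ θ' : Subst V Fn, UnifP θ' Pr → ∃ γ, Subst.comp σ γ = θ') := by
  intro Pr
  induction Pr using unify.induct with
  | case1 =>
    intro θ _
    exact ⟨Term.var, by rw [unify], fun p hp => absurd hp List.not_mem_nil,
      fun θ' _ => ⟨θ', Subst.var_comp θ'⟩⟩
  | case2 a b ih =>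
    intro θ h
    obtain ⟨σ, h1, h2, h3⟩ := ih θ (fun p hp => h p (List.mem_cons_of_mem _ hp))
    refine ⟨σ, ?_, ?_, ?_⟩
    · rw [unify, if_pos rfl]; exact h1
    · intro p hp
      rcases List.mem_cons.1 hp with rfl | hp
      · rfl
      · exact h2 p hp
    · intro θ' h'; exact h3 θ' (fun p hp => h' p (List.mem_cons_of_mem _ hp))
  | case3 a b c d e =>
    intro θ h
    exfalso
    have hhead : θ a = b.subst θ := by
      simpa using h (Term.var a, b) (List.mem_cons_self)
    cases b with
    | var v => simp at e; subst e; exact d rfl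
    | app f' ts' => exact occurs_no_unif e hhead
  | case4 a b c d h ih =>
    simp only [attach_map_pair] at ih
    intro θ hθ
    have hhead : θ a = b.subst θ := by
      simpa using hθ (Term.var a, b) (List.mem_cons_self)
    have hδθ : Subst.comp (sng a b) θ = θ := sng_comp_eq_self hhead
    have hbδ : b.subst (sng a b) = b := subst_sng_of_not_mem h
    have key : ∀ θ₀ : Subst V Fn, θ₀ a = b.subst θ₀ → UnifP θ₀ ((Term.var a, b) :: c) →
        UnifP θ₀ (c.map fun p => (p.1.subst (sng a b), p.2.subst (sng a b))) := by
      intro θ₀ hh hu p hp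
      obtain ⟨q, hq, rfl⟩ := List.mem_map.1 hp
      show (q.1.subst (sng a b)).subst θ₀ = (q.2.subst (sng a b)).subst θ₀
      rw [← Term.subst_comp, ← Term.subst_comp, sng_comp_eq_self hh]
      exact hu q (List.mem_cons_of_mem _ hq)
    obtain ⟨σ', h1, h2, h3⟩ := ih θ (key θ hhead hθ)
    refine ⟨(sng a b).comp σ', ?_, ?_, ?_⟩
    · rw [unify, if_neg d, if_neg h, h1]; rfl
    · intro p hp
      rcases List.mem_cons.1 hp with rfl | hp
      · show (Term.var a).subst ((sng a b).comp σ') = b.subst ((sng a b).comp σ')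
        rw [Term.subst_comp, Term.subst_comp, hbδ]
        simp
      · have := h2 (p.1.subst (sng a b), p.2.subst (sng a b)) (List.mem_map.2 ⟨p, hp, rfl⟩)
        show p.1.subst ((sng a b).comp σ') = p.2.subst ((sng a b).comp σ')
        rw [Term.subst_comp, Term.subst_comp]; exact this
    · intro θ' hθ'
      have hhead' : θ' a = b.subst θ' := by
        simpa using hθ' (Term.var a, b) (List.mem_cons_self)
      obtain ⟨γ, hγ⟩ := h3 θ' (key θ' hhead' hθ')
      exact ⟨γ, by rw [Subst.comp_assoc, hγ, sng_comp_eq_self hhead']⟩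
  | case5 a b c d e =>
    intro θ h
    exfalso
    have hhead : (Term.app a b).subst θ = θ c := by
      simpa using h (Term.app a b, Term.var c) (List.mem_cons_self)
    exact occurs_no_unif e hhead.symm
  | case6 a b c d h ih =>
    simp only [attach_map_pair] at ih
    intro θ hθ
    have hhead : θ c = (Term.app a b).subst θ := by
      have := hθ (Term.app a b, Term.var c) (List.mem_cons_self)
      simpa using this.symm
    have hbδ : (Term.app a b).subst (sng c (Term.app a b)) = Term.app a b :=
      subst_sng_of_not_mem h
    have key : ∀ θ₀ : Subst V Fn, θ₀ c = (Term.app a b).subst θ₀ →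
        UnifP θ₀ ((Term.app a b, Term.var c) :: d) →
        UnifP θ₀ (d.map fun p => (p.1.subst (sng c (Term.app a b)),
          p.2.subst (sng c (Term.app a b)))) := by
      intro θ₀ hh hu p hp
      obtain ⟨q, hq, rfl⟩ := List.mem_map.1 hp
      show (q.1.subst _).subst θ₀ = (q.2.subst _).subst θ₀
      rw [← Term.subst_comp, ← Term.subst_comp, sng_comp_eq_self hh]
      exact hu q (List.mem_cons_of_mem _ hq)
    obtain ⟨σ', h1, h2, h3⟩ := ih θ (key θ hhead hθ)
    refine ⟨(sng c (Term.app a b)).comp σ', ?_, ?_, ?_⟩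
    · rw [unify, if_neg h, h1]; rfl
    · intro p hp
      rcases List.mem_cons.1 hp with rfl | hp
      · show (Term.app a b).subst _ = (Term.var c).subst _
        rw [Term.subst_comp, Term.subst_comp, hbδ]
        simp
      · have := h2 (p.1.subst _, p.2.subst _) (List.mem_map.2 ⟨p, hp, rfl⟩)
        show p.1.subst _ = p.2.subst _
        rw [Term.subst_comp, Term.subst_comp]; exact this
    · intro θ' hθ'
      have hhead' : θ' c = (Term.app a b).subst θ' := by
        have := hθ' (Term.app a b, Term.var c) (List.mem_cons_self)
        simpa using this.symm
      obtain ⟨γ, hγ⟩ := h3 θ' (key θ' hhead' hθ')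
      exact ⟨γ, by rw [Subst.comp_assoc, hγ, sng_comp_eq_self hhead']⟩
  | case7 a b c d e h ih =>
    obtain ⟨rfl, hlen⟩ := h
    intro θ hθ
    have hhead : b.map (Term.subst θ) = d.map (Term.subst θ) := by
      have := hθ (Term.app a b, Term.app a d) (List.mem_cons_self)
      simpa using this
    have key : ∀ θ₀ : Subst V Fn, UnifP θ₀ ((Term.app a b, Term.app a d) :: e) →
        UnifP θ₀ (b.zip d ++ e) := by
      intro θ₀ hu p hp
      rcases List.mem_append.1 hp with hp | hp
      · have hm : b.map (Term.subst θ₀) = d.map (Term.subst θ₀) := by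
          simpa using hu (Term.app a b, Term.app a d) (List.mem_cons_self)
        exact zip_of_map_eq _ _ _ hm p hp
      · exact hu p (List.mem_cons_of_mem _ hp)
    obtain ⟨σ, h1, h2, h3⟩ := ih θ (key θ hθ)
    refine ⟨σ, ?_, ?_, ?_⟩
    · rw [unify, if_pos ⟨rfl, hlen⟩]; exact h1
    · intro p hp
      rcases List.mem_cons.1 hp with rfl | hp
      · show (Term.app a b).subst σ = (Term.app a d).subst σ
        simp only [Term.subst_app]
        congr 1
        exact map_eq_of_zip _ _ _ hlen (fun p hp => h2 p (List.mem_append_left _ hp))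
      · exact h2 p (List.mem_append_right _ hp)
    · intro θ' hθ'
      exact h3 θ' (key θ' hθ')
  | case8 a b c d e hne =>
    intro θ hθ
    exfalso
    have := hθ (Term.app a b, Term.app c d) (List.mem_cons_self)
    simp only [Term.subst_app, Term.app.injEq] at this
    exact hne ⟨this.1, by
      have := congrArg List.length this.2
      simpa using this⟩

end UnifyCorrect

section MGU
variable {V Fn P : Type}

@[simp] theorem Lit.subst_pol (σ : Subst V Fn) (l : Lit V Fn P) :
    (l.subst σ).pol = l.pol := rfl

@[simp] theorem Lit.subst_atom (σ : Subst V Fn) (l : Lit V Fn P) :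
    (l.subst σ).atom = l.atom.subst σ := rfl

@[simp] theorem Atom.subst_pred (σ : Subst V Fn) (A : Atom V Fn P) :
    (A.subst σ).pred = A.pred := rfl

@[simp] theorem Atom.subst_args (σ : Subst V Fn) (A : Atom V Fn P) :
    (A.subst σ).args = A.args.map (Term.subst σ) := rfl

theorem Lit.subst_eq_iff {σ : Subst V Fn} {l m : Lit V Fn P} :
    l.subst σ = m.subst σ ↔ l.pol = m.pol ∧ l.atom.pred = m.atom.pred ∧
      l.atom.args.map (Term.subst σ) = m.atom.args.map (Term.subst σ) := by
  constructor
  · intro h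
    refine ⟨by have := congrArg Lit.pol h; simpa using this, ?_, ?_⟩
    · have := congrArg (fun x => x.atom.pred) h; simpa using this
    · have := congrArg (fun x => x.atom.args) h; simpa using this
  · rintro ⟨h1, h2, h3⟩
    show Lit.mk _ _ = Lit.mk _ _
    rw [h1]
    congr 1
    show Atom.mk _ _ = Atom.mk _ _
    rw [h2, h3]

theorem mgu_exists (ls : List (Lit V Fn P)) (θ : Subst V Fn) (h : IsUnifier θ ls) :
    ∃ σ, IsMGU σ ls := by
  cases ls with
  | nil =>
    exact ⟨Term.var, fun l hl => absurd hl List.not_mem_nil,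
      fun τ _ => ⟨τ, Subst.var_comp τ⟩⟩
  | cons L tl =>
    set pairs := tl.flatMap fun l => L.atom.args.zip l.atom.args with hpairs
    have hsame : ∀ l ∈ tl, l.pol = L.pol ∧ l.atom.pred = L.atom.pred ∧
        l.atom.args.length = L.atom.args.length := by
      intro l hl
      have := h L (List.mem_cons_self) l (List.mem_cons_of_mem _ hl)
      obtain ⟨h1, h2, h3⟩ := Lit.subst_eq_iff.1 this
      exact ⟨h1.symm, h2.symm, by
        have := congrArg List.length h3; simpa using this.symm⟩
    have hUP : ∀ θ₀ : Subst V Fn, IsUnifier θ₀ (L :: tl) → UnifP θ₀ pairs := by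
      intro θ₀ h₀ p hp
      obtain ⟨l, hl, hpl⟩ := List.mem_flatMap.1 hp
      have := h₀ L (List.mem_cons_self) l (List.mem_cons_of_mem _ hl)
      obtain ⟨-, -, h3⟩ := Lit.subst_eq_iff.1 this
      exact zip_of_map_eq _ _ _ h3 p hpl
    obtain ⟨σ, h1, h2, h3⟩ := unify_correct pairs θ (hUP θ h)
    refine ⟨σ, ?_, ?_⟩
    · -- IsUnifier σ (L :: tl)
      have hall : ∀ l ∈ tl, l.subst σ = L.subst σ := by
        intro l hl
        obtain ⟨hp1, hp2, hp3⟩ := hsame l hl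
        refine Lit.subst_eq_iff.2 ⟨hp1, hp2, ?_⟩
        refine (map_eq_of_zip _ _ _ (by rw [hp3]) ?_).symm
        intro p hp
        exact h2 p (List.mem_flatMap.2 ⟨l, hl, hp⟩)
      intro l₁ hl₁ l₂ hl₂
      have hall'' := hall
      have hall' : ∀ l ∈ L :: tl, l.subst σ = L.subst σ := by
        intro l hl
        rcases List.mem_cons.1 hl with rfl | hl
        · rfl
        · exact hall _ hl
      rw [hall' _ hl₁, hall' _ hl₂]
    · intro τ hτ
      exact h3 τ (hUP τ hτ)

end MGU

section ClauseLemmas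
variable {V Fn P : Type}

theorem Atom.subst_congr {σ γ : Subst V Fn} {A : Atom V Fn P}
    (h : ∀ v ∈ A.vars, σ v = γ v) : A.subst σ = A.subst γ := by
  show Atom.mk _ _ = Atom.mk _ _
  congr 1
  exact List.map_congr_left fun t ht =>
    Term.subst_congr fun v hv => h v ⟨t, ht, hv⟩

theorem Lit.subst_congr {σ γ : Subst V Fn} {l : Lit V Fn P}
    (h : ∀ v ∈ l.vars, σ v = γ v) : l.subst σ = l.subst γ := by
  show Lit.mk _ _ = Lit.mk _ _
  congr 1
  exact Atom.subst_congr h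

theorem Clause.subst_congr {σ γ : Subst V Fn} {C : Clause V Fn P}
    (h : ∀ v ∈ C.vars, σ v = γ v) : C.subst σ = C.subst γ := by
  refine Multiset.map_congr rfl fun l hl => ?_
  exact Lit.subst_congr fun v hv => h v ⟨l, hl, hv⟩

theorem Lit.subst_comp (σ γ : Subst V Fn) (l : Lit V Fn P) :
    l.subst (σ.comp γ) = (l.subst σ).subst γ := by
  show Lit.mk _ _ = Lit.mk _ _
  congr 1
  show Atom.mk _ _ = Atom.mk _ _
  congr 1
  simp [List.map_map, Term.subst_comp, Function.comp_def]

theorem Clause.subst_comp (σ γ : Subst V Fn) (C : Clause V Fn P) :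
    C.subst (σ.comp γ) = (C.subst σ).subst γ := by
  show C.map _ = (C.map _).map _
  rw [Multiset.map_map]
  exact Multiset.map_congr rfl fun l _ => Lit.subst_comp σ γ l

@[simp] theorem Lit.compl_subst (σ : Subst V Fn) (l : Lit V Fn P) :
    (l.compl).subst σ = (l.subst σ).compl := rfl

@[simp] theorem Lit.vars_compl (l : Lit V Fn P) : l.compl.vars = l.vars := rfl

end ClauseLemmas

/-- If `C = L ∨ C'` is blocked by `L` in `F` and `α` falsifies the ground instance `Cλ`,
then flipping the atom of `Lλ` preserves satisfaction of every ground instance of every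
clause of `F \ {C}` that `α` satisfies. -/
theorem stmt5 {V Fn P : Type} (F : Set (Clause V Fn P)) (L : Lit V Fn P) (C' : Clause V Fn P)
    (hdisj : ∀ D ∈ F, D ≠ L ::ₘ C' → Clause.vars (L ::ₘ C') ∩ Clause.vars D = ∅)
    (hbl : BlockedEF L C' F)
    (α : PAssign V Fn P) (lam : Subst V Fn)
    (hground : (Clause.subst lam (L ::ₘ C')).IsGround)
    (hfal : ¬ satC α (Clause.subst lam (L ::ₘ C'))) :
    ∀ D ∈ F, D ≠ L ::ₘ C' → ∀ τ : Subst V Fn, (Clause.subst τ D).IsGround →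
      satC α (Clause.subst τ D) → satC (flipAtom α (L.subst lam).atom) (Clause.subst τ D) := by
  classical
  intro D hDF hDne τ hgD hsat
  set A0 := (L.subst lam).atom with hA0
  by_cases hex : ∃ l ∈ Clause.subst τ D, litTrue α l ∧ l.atom ≠ A0
  · obtain ⟨l, hl, hlt, hla⟩ := hex
    refine ⟨l, hl, ?_⟩
    simpa [litTrue, flipAtom, hla] using hlt
  · exfalso
    push_neg at hex
    -- L λ is false under α
    have hLC : (L.subst lam) ∈ Clause.subst lam (L ::ₘ C') := by
      show _ ∈ Multiset.map _ _
      simp [Clause.subst]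
    have hLfalse : ¬ litTrue α (L.subst lam) := fun h => hfal ⟨_, hLC, h⟩
    have hαA0 : α A0 = !L.pol := by
      have hp : (L.subst lam).pol = L.pol := rfl
      simp only [litTrue, hp] at hLfalse
      cases hb : α A0 <;> cases hc : L.pol <;> simp_all
    set K : Lit V Fn P := ⟨!L.pol, A0⟩ with hK
    -- every α-true literal of Dτ is K
    have hKall : ∀ l ∈ Clause.subst τ D, litTrue α l → l = K := by
      intro l hl hlt
      have h1 : l.atom = A0 := hex l hl hlt
      have h2 : α l.atom = l.pol := hlt
      rw [h1, hαA0] at h2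
      rw [hK, h2, ← h1]
    set Ns := D.filter (fun N => N.subst τ = K) with hNs
    set Dr := D.filter (fun N => ¬ N.subst τ = K) with hDr
    have hsplit : Ns + Dr = D := Multiset.filter_add_not _ _
    obtain ⟨l0, hl0, hl0t⟩ := hsat
    obtain ⟨N0, hN0, rfl⟩ := Multiset.mem_map.1 hl0
    have hN0K : N0.subst τ = K := hKall _ hl0 hl0t
    have hNsne : Ns ≠ 0 := by
      intro h0
      have : N0 ∈ Ns := Multiset.mem_filter.2 ⟨hN0, hN0K⟩
      rw [h0] at this
      exact absurd this (Multiset.notMem_zero _)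
    -- the combined ground substitution
    set σ0 : Subst V Fn := fun v => if v ∈ Clause.vars (L ::ₘ C') then lam v else τ v with hσ0
    have hdisjD := hdisj D hDF hDne
    have hσ0C : ∀ v ∈ Clause.vars (L ::ₘ C'), σ0 v = lam v := by
      intro v hv; simp [hσ0, hv]
    have hσ0D : ∀ v ∈ Clause.vars D, σ0 v = τ v := by
      intro v hv
      have : v ∉ Clause.vars (L ::ₘ C') := by
        intro hv2
        have : v ∈ Clause.vars (L ::ₘ C') ∩ Clause.vars D := ⟨hv2, hv⟩
        rw [hdisjD] at this
        exact this
      simp [hσ0, this]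
    -- σ0 unifies L with complements of Ns
    set ls : List (Lit V Fn P) := L :: (Ns.map Lit.compl).toList with hls
    have hmemD : ∀ N ∈ Ns, N ∈ D := fun N hN => (Multiset.mem_filter.1 hN).1
    have hLσ0 : L.subst σ0 = L.subst lam :=
      Lit.subst_congr fun v hv => hσ0C v ⟨L, Multiset.mem_cons_self _ _, hv⟩
    have hNσ0 : ∀ N ∈ Ns, (N.compl).subst σ0 = L.subst lam := by
      intro N hN
      have h1 : (N.compl).subst σ0 = (N.compl).subst τ :=
        Lit.subst_congr fun v hv => hσ0D v ⟨N, hmemD N hN, hv⟩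
      rw [h1, Lit.compl_subst, (Multiset.mem_filter.1 hN).2]
      show Lit.mk _ _ = Lit.mk _ _
      simp [hK, Lit.compl, hA0]
    have hunif : IsUnifier σ0 ls := by
      have hall : ∀ l ∈ ls, l.subst σ0 = L.subst lam := by
        intro l hl
        rcases List.mem_cons.1 hl with rfl | hl
        · exact hLσ0
        · rw [Multiset.mem_toList, Multiset.mem_map] at hl
          obtain ⟨N, hN, rfl⟩ := hl
          exact hNσ0 N hN
      intro l₁ hl₁ l₂ hl₂
      rw [hall _ hl₁, hall _ hl₂]
    obtain ⟨σ, hmgu⟩ := mgu_exists ls σ0 hunif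
    have hval := hbl D hDF hDne Ns Dr hsplit hNsne σ hmgu
    obtain ⟨A, hpos, hneg⟩ := hval
    obtain ⟨γ, hγ⟩ := hmgu.2 σ0 hunif
    -- transport the valid clause along γ
    have hC'σ0 : Clause.subst σ0 C' = Clause.subst lam C' :=
      Clause.subst_congr fun v hv => hσ0C v (by
        obtain ⟨l, hl, hvl⟩ := hv
        exact ⟨l, Multiset.mem_cons_of_mem hl, hvl⟩)
    have hDrσ0 : Clause.subst σ0 Dr = Clause.subst τ Dr :=
      Clause.subst_congr fun v hv => hσ0D v (by
        obtain ⟨l, hl, hvl⟩ := hv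
        exact ⟨l, (Multiset.mem_filter.1 hl).1, hvl⟩)
    have htrans : ∀ l ∈ (Clause.subst σ C' + Clause.subst σ Dr : Clause V Fn P),
        l.subst γ ∈ (Clause.subst lam C' + Clause.subst τ Dr : Clause V Fn P) := by
      intro l hl
      rcases Multiset.mem_add.1 hl with hl | hl
      · apply Multiset.mem_add.2
        left
        rw [← hC'σ0, ← hγ, Clause.subst_comp]
        exact Multiset.mem_map_of_mem _ hl
      · apply Multiset.mem_add.2
        right
        rw [← hDrσ0, ← hγ, Clause.subst_comp]
        exact Multiset.mem_map_of_mem _ hl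
    -- pick the true literal among the complementary pair
    set B := A.subst γ with hB
    have hmempos : (⟨true, B⟩ : Lit V Fn P) ∈ (Clause.subst lam C' + Clause.subst τ Dr : Clause V Fn P) :=
      htrans _ hpos
    have hmemneg : (⟨false, B⟩ : Lit V Fn P) ∈ (Clause.subst lam C' + Clause.subst τ Dr : Clause V Fn P) :=
      htrans _ hneg
    have hlt : ∃ l ∈ (Clause.subst lam C' + Clause.subst τ Dr : Clause V Fn P), litTrue α l := by
      cases hb : α B with
      | true => exact ⟨⟨true, B⟩, hmempos, by simp [litTrue, hb]⟩
      | false => exact ⟨⟨false, B⟩, hmemneg, by simp [litTrue, hb]⟩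
    obtain ⟨l, hl, hlt⟩ := hlt
    rcases Multiset.mem_add.1 hl with hl | hl
    · -- l in C'λ ⊆ Cλ contradicts hfal
      apply hfal
      refine ⟨l, ?_, hlt⟩
      show l ∈ Multiset.map _ _
      rw [Multiset.map_cons]
      exact Multiset.mem_cons_of_mem hl
    · -- l in Dr τ : must be K yet not K
      obtain ⟨N, hN, rfl⟩ := Multiset.mem_map.1 hl
      have hmem : N.subst τ ∈ Clause.subst τ D := by
        apply Multiset.mem_map_of_mem
        exact (Multiset.mem_filter.1 hN).1
      have := hKall _ hmem hlt
      exact (Multiset.mem_filter.1 hN).2 this
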